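/- Let G be a bipartite graph with bipartition (C, I), and let G' be obtained from G by adding all edges among C (making C a clique). Then for every vertex subset U, the induced subgraph G[U] contains an induced 2K₂ if and only if G'[U] contains an induced P₄. -/

import Mathlib

set_option linter.unreachableTactic false
set_option linter.unusedTactic false

/-- `2K₂`: the disjoint union of two edges, on 4 vertices. -/
def twoK2 : SimpleGraph (Fin 4) :=
  SimpleGraph.fromEdgeSet {s(0, 1), s(2, 3)}

/-- The graph obtained from `G` by adding all edges among `C`. -/
def addCliqueEdges {V : Type} (G : SimpleGraph V) (C : Set V) : SimpleGraph V where
  Adj u v := G.Adj u v ∨ (u ≠ v ∧ u ∈ C ∧ v ∈ C)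
  symm := by constructor; intro u v h; rcases h with h | ⟨h, h1, h2⟩
             · exact Or.inl h.symm
             · exact Or.inr ⟨h.symm, h2, h1⟩
  loopless := by constructor; intro v h; rcases h with h | ⟨h, _⟩ <;> simp_all

lemma twoK2_adj (i j : Fin 4) : twoK2.Adj i j ↔
    (i = 0 ∧ j = 1) ∨ (i = 1 ∧ j = 0) ∨ (i = 2 ∧ j = 3) ∨ (i = 3 ∧ j = 2) := by
  fin_cases i <;> fin_cases j <;> simp [twoK2]

lemma p4_adj (i j : Fin 4) : (SimpleGraph.pathGraph 4).Adj i j ↔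
    (i = 0 ∧ j = 1) ∨ (i = 1 ∧ j = 0) ∨ (i = 1 ∧ j = 2) ∨ (i = 2 ∧ j = 1) ∨
    (i = 2 ∧ j = 3) ∨ (i = 3 ∧ j = 2) := by
  rw [SimpleGraph.pathGraph_adj]; fin_cases i <;> fin_cases j <;> simp <;> decide

lemma build2K2 {W : Type*} (H : SimpleGraph W) (a b c d : W)
    (hab : H.Adj a b) (hcd : H.Adj c d)
    (hac : ¬H.Adj a c) (had : ¬H.Adj a d) (hbc : ¬H.Adj b c) (hbd : ¬H.Adj b d) :
    Nonempty (twoK2 ↪g H) := by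
  have nab : a ≠ b := hab.ne
  have ncd : c ≠ d := hcd.ne
  have nac : a ≠ c := fun h => had (h ▸ hcd)
  have nad : a ≠ d := fun h => hac (by rw [h]; exact hcd.symm)
  have nbc : b ≠ c := fun h => hbd (by rw [h]; exact hcd)
  have nbd : b ≠ d := fun h => hbc (by rw [h]; exact hcd.symm)
  refine ⟨⟨⟨![a, b, c, d], ?_⟩, ?_⟩⟩
  · intro i j hij
    fin_cases i <;> fin_cases j <;> simp_all <;> first | rfl | (exfalso; simp_all)
  · intro i j
    show H.Adj (![a, b, c, d] i) (![a, b, c, d] j) ↔ twoK2.Adj i j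
    rw [twoK2_adj]
    fin_cases i <;> fin_cases j <;>
      simp_all [H.adj_comm a b, H.adj_comm c d, H.adj_comm a c, H.adj_comm a d,
        H.adj_comm b c, H.adj_comm b d, SimpleGraph.irrefl]

lemma buildP4 {W : Type*} (H : SimpleGraph W) (a b c d : W)
    (hab : H.Adj a b) (hbc : H.Adj b c) (hcd : H.Adj c d)
    (hac : ¬H.Adj a c) (had : ¬H.Adj a d) (hbd : ¬H.Adj b d) :
    Nonempty (SimpleGraph.pathGraph 4 ↪g H) := by
  have nab : a ≠ b := hab.ne
  have nbc : b ≠ c := hbc.ne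
  have ncd : c ≠ d := hcd.ne
  have nac : a ≠ c := fun h => had (h ▸ hcd)
  have nad : a ≠ d := fun h => hac (by rw [h]; exact hcd.symm)
  have nbd : b ≠ d := fun h => had (h ▸ hab)
  refine ⟨⟨⟨![a, b, c, d], ?_⟩, ?_⟩⟩
  · intro i j hij
    fin_cases i <;> fin_cases j <;> simp_all <;> first | rfl | (exfalso; simp_all)
  · intro i j
    show H.Adj (![a, b, c, d] i) (![a, b, c, d] j) ↔ (SimpleGraph.pathGraph 4).Adj i j
    rw [p4_adj]
    fin_cases i <;> fin_cases j <;>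
      simp_all [H.adj_comm a b, H.adj_comm b c, H.adj_comm c d, H.adj_comm a c,
        H.adj_comm a d, H.adj_comm b d, SimpleGraph.irrefl]

theorem stmt13 {V : Type} [Fintype V] (G : SimpleGraph V) (C I : Set V)
    (hpart : C ∪ I = Set.univ) (hdisj : Disjoint C I)
    (hbip : ∀ u v : V, G.Adj u v → ((u ∈ C ∧ v ∈ I) ∨ (u ∈ I ∧ v ∈ C)))
    (U : Set V) :
    Nonempty (twoK2 ↪g G.induce U) ↔
      Nonempty (SimpleGraph.pathGraph 4 ↪g (addCliqueEdges G C).induce U) := by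
  set G' := addCliqueEdges G C with hG'
  have hG'adj : ∀ u v : V, G'.Adj u v ↔ (G.Adj u v ∨ (u ≠ v ∧ u ∈ C ∧ v ∈ C)) := by
    intro u v; rfl
  have hCI : ∀ v : V, v ∉ C → v ∈ I := by
    intro v hv
    have := hpart ▸ Set.mem_univ v
    rcases this with h | h
    · exact absurd h hv
    · exact h
  have hIC : ∀ v : V, v ∈ I → v ∉ C := fun v hv hc => hdisj.ne_of_mem hc hv rfl
  -- key helper: going from 2K2 data with explicit bipartition sides to P4
  have key : ∀ a b c d : U, a.1 ∈ C → b.1 ∈ I → c.1 ∈ C → d.1 ∈ I →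
      G.Adj a.1 b.1 → G.Adj c.1 d.1 →
      ¬G.Adj a.1 c.1 → ¬G.Adj a.1 d.1 → ¬G.Adj b.1 c.1 → ¬G.Adj b.1 d.1 →
      Nonempty (SimpleGraph.pathGraph 4 ↪g G'.induce U) := by
    intro a b c d haC hbI hcC hdI hab hcd hac had hbc hbd
    have nac : a.1 ≠ c.1 := fun h => had (h ▸ hcd)
    apply buildP4 (G'.induce U) b a c d
    · exact Or.inl hab.symm
    · exact Or.inr ⟨nac, haC, hcC⟩
    · exact Or.inl hcd
    · rintro (h | ⟨_, h, _⟩)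
      · exact hbc h
      · exact hIC _ hbI h
    · rintro (h | ⟨_, _, h⟩)
      · exact hbd h
      · exact hIC _ hdI h
    · rintro (h | ⟨_, _, h⟩)
      · exact had h
      · exact hIC _ hdI h
  constructor
  · rintro ⟨e⟩
    set a := e 0; set b := e 1; set c := e 2; set d := e 3
    have adj : ∀ i j : Fin 4, (G.induce U).Adj (e i) (e j) ↔ twoK2.Adj i j :=
      fun i j => e.map_rel_iff
    have hab : G.Adj (e 0).1 (e 1).1 := (adj 0 1).2 (by simp [twoK2])
    have hcd : G.Adj (e 2).1 (e 3).1 := (adj 2 3).2 (by simp [twoK2])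
    have hac : ¬G.Adj (e 0).1 (e 2).1 := fun h => by
      have := (adj 0 2).1 h; simp [twoK2] at this
    have had : ¬G.Adj (e 0).1 (e 3).1 := fun h => by
      have := (adj 0 3).1 h; simp [twoK2] at this
    have hbc : ¬G.Adj (e 1).1 (e 2).1 := fun h => by
      have := (adj 1 2).1 h; simp [twoK2] at this
    have hbd : ¬G.Adj (e 1).1 (e 3).1 := fun h => by
      have := (adj 1 3).1 h; simp [twoK2] at this
    rcases hbip _ _ hab with ⟨h1, h2⟩ | ⟨h1, h2⟩ <;>
      rcases hbip _ _ hcd with ⟨h3, h4⟩ | ⟨h3, h4⟩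
    · exact key (e 0) (e 1) (e 2) (e 3) h1 h2 h3 h4 hab hcd hac had hbc hbd
    · exact key (e 0) (e 1) (e 3) (e 2) h1 h2 h4 h3 hab hcd.symm
        (fun h => had h) (fun h => hac h) (fun h => hbd h) (fun h => hbc h)
    · exact key (e 1) (e 0) (e 2) (e 3) h2 h1 h3 h4 hab.symm hcd hbc hbd hac had
    · exact key (e 1) (e 0) (e 3) (e 2) h2 h1 h4 h3 hab.symm hcd.symm hbd hbc had hac
  · rintro ⟨e⟩
    have adj : ∀ i j : Fin 4, (G'.induce U).Adj (e i) (e j) ↔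
        (SimpleGraph.pathGraph 4).Adj i j := fun i j => e.map_rel_iff
    have hab : G'.Adj (e 0).1 (e 1).1 := (adj 0 1).2 (by rw [SimpleGraph.pathGraph_adj]; decide)
    have hbc : G'.Adj (e 1).1 (e 2).1 := (adj 1 2).2 (by rw [SimpleGraph.pathGraph_adj]; decide)
    have hcd : G'.Adj (e 2).1 (e 3).1 := (adj 2 3).2 (by rw [SimpleGraph.pathGraph_adj]; decide)
    have hac : ¬G'.Adj (e 0).1 (e 2).1 := fun h => by
      have := (adj 0 2).1 h; rw [SimpleGraph.pathGraph_adj] at this; revert this; decide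
    have had : ¬G'.Adj (e 0).1 (e 3).1 := fun h => by
      have := (adj 0 3).1 h; rw [SimpleGraph.pathGraph_adj] at this; revert this; decide
    have hbd : ¬G'.Adj (e 1).1 (e 3).1 := fun h => by
      have := (adj 1 3).1 h; rw [SimpleGraph.pathGraph_adj] at this; revert this; decide
    have nac : (e 0).1 ≠ (e 2).1 := fun h => by
      have := e.injective (Subtype.ext h : (e 0 : ↥U) = e 2); exact absurd this (by decide)
    have nbd : (e 1).1 ≠ (e 3).1 := fun h => by
      have := e.injective (Subtype.ext h : (e 1 : ↥U) = e 3); exact absurd this (by decide)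
    -- no G-edge between two I vertices, no G-edge between two C vertices
    have noII : ∀ u v : V, u ∈ I → v ∈ I → ¬G.Adj u v := by
      intro u v hu hv h
      rcases hbip _ _ h with ⟨h1, _⟩ | ⟨_, h2⟩
      · exact hIC _ hu h1
      · exact hIC _ hv h2
    have noCC : ∀ u v : V, u ∈ C → v ∈ C → ¬G.Adj u v := by
      intro u v hu hv h
      rcases hbip _ _ h with ⟨_, h2⟩ | ⟨h1, _⟩
      · exact hIC _ h2 hv
      · exact hIC _ h1 hu
    -- b ∈ C
    have hbC : (e 1).1 ∈ C := by
      by_contra hb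
      have hbI := hCI _ hb
      have hGab : G.Adj (e 0).1 (e 1).1 := by
        rcases hab with h | ⟨_, _, h⟩
        · exact h
        · exact absurd h hb
      have hGbc : G.Adj (e 1).1 (e 2).1 := by
        rcases hbc with h | ⟨_, h, _⟩
        · exact h
        · exact absurd h hb
      have haC : (e 0).1 ∈ C := by
        rcases hbip _ _ hGab with ⟨h1, _⟩ | ⟨_, h2⟩
        · exact h1
        · exact absurd h2 (hIC _ hbI)
      have hcC : (e 2).1 ∈ C := by
        rcases hbip _ _ hGbc with ⟨h1, _⟩ | ⟨_, h2⟩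
        · exact absurd h1 (hIC _ hbI)
        · exact h2
      exact hac (Or.inr ⟨nac, haC, hcC⟩)
    have hcC : (e 2).1 ∈ C := by
      by_contra hc
      have hcI := hCI _ hc
      have hGbc : G.Adj (e 1).1 (e 2).1 := by
        rcases hbc with h | ⟨_, _, h⟩
        · exact h
        · exact absurd h hc
      have hGcd : G.Adj (e 2).1 (e 3).1 := by
        rcases hcd with h | ⟨_, h, _⟩
        · exact h
        · exact absurd h hc
      have hbC' : (e 1).1 ∈ C := by
        rcases hbip _ _ hGbc with ⟨h1, _⟩ | ⟨_, h2⟩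
        · exact h1
        · exact absurd h2 hc
      have hdC : (e 3).1 ∈ C := by
        rcases hbip _ _ hGcd with ⟨h1, _⟩ | ⟨_, h2⟩
        · exact absurd h1 (hIC _ hcI)
        · exact h2
      exact hbd (Or.inr ⟨nbd, hbC', hdC⟩)
    have haI : (e 0).1 ∈ I := by
      apply hCI; intro haC
      exact hac (Or.inr ⟨nac, haC, hcC⟩)
    have hdI : (e 3).1 ∈ I := by
      apply hCI; intro hdC
      exact hbd (Or.inr ⟨nbd, hbC, hdC⟩)
    have hGab : G.Adj (e 0).1 (e 1).1 := by
      rcases hab with h | ⟨_, h, _⟩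
      · exact h
      · exact absurd h (hIC _ haI)
    have hGcd : G.Adj (e 2).1 (e 3).1 := by
      rcases hcd with h | ⟨_, _, h⟩
      · exact h
      · exact absurd h (hIC _ hdI)
    apply build2K2 (G.induce U) (e 0) (e 1) (e 2) (e 3) hGab hGcd
    · exact fun h => hac (Or.inl h)
    · exact fun h => had (Or.inl h)
    · exact noCC _ _ hbC hcC
    · exact fun h => hbd (Or.inl h)
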